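/- Let H be a real Hilbert space and let A, B ⊆ H be nonempty closed convex sets. If R_A(x) ∈ B, then P_A(x) is a circumcenter of x with respect to (A, B), and it is the unique such circumcenter; in particular, the CRM step from such a point lands in A. -/

import Mathlib

open RealInnerProductSpace Pointwise

/-- `p` is the metric projection of `x` onto `C`: the point of `C` such that
`⟪y - p, x - p⟫ ≤ 0` for all `y ∈ C`. -/
def IsProj {E : Type*} [NormedAddCommGroup E] [InnerProductSpace ℝ E]
    (C : Set E) (x p : E) : Prop :=
  p ∈ C ∧ ∀ y ∈ C, ⟪y - p, x - p⟫ ≤ 0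

/-- `c` is a circumcenter of `x` with respect to `(A, B)`: writing `R_A x = 2 P_A x - x`
and `R_B (R_A x) = 2 P_B (R_A x) - R_A x`, the point `c` lies in the affine span of
`{x, R_A x, R_B (R_A x)}` and is equidistant from these three points. -/
def IsCircumcenter {E : Type*} [NormedAddCommGroup E] [InnerProductSpace ℝ E]
    (A B : Set E) (x c : E) : Prop :=
  ∃ pa pb : E, IsProj A x pa ∧ IsProj B ((2 : ℝ) • pa - x) pb ∧
    c ∈ affineSpan ℝ
      ({x, (2 : ℝ) • pa - x, (2 : ℝ) • pb - ((2 : ℝ) • pa - x)} : Set E) ∧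
    ‖c - x‖ = ‖c - ((2 : ℝ) • pa - x)‖ ∧
    ‖c - x‖ = ‖c - ((2 : ℝ) • pb - ((2 : ℝ) • pa - x))‖

lemma isProj_unique {E : Type*} [NormedAddCommGroup E] [InnerProductSpace ℝ E]
    {C : Set E} {x p q : E} (hp : IsProj C x p) (hq : IsProj C x q) : p = q := by
  have h1 := hp.2 q hq.1
  have h2 := hq.2 p hp.1
  have e : ⟪q - p, q - p⟫ = ⟪q - p, x - p⟫ + ⟪p - q, x - q⟫ := by
    rw [show p - q = -(q - p) by abel, show x - q = -(q - x) by abel, inner_neg_neg,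
      ← inner_add_right]
    congr 1
    abel
  have key : ⟪q - p, q - p⟫ ≤ 0 := by rw [e]; linarith
  have h0 := real_inner_self_nonpos.mp key
  have : q = p := by rwa [sub_eq_zero] at h0
  exact this.symm

lemma isProj_self {E : Type*} [NormedAddCommGroup E] [InnerProductSpace ℝ E]
    {C : Set E} {x : E} (hx : x ∈ C) : IsProj C x x := by
  refine ⟨hx, fun y _ => ?_⟩
  simp

/-- For nonempty closed convex sets `A, B` in a real Hilbert space, if
`pa = P_A x` and `R_A x = 2 pa - x ∈ B`, then `pa` is a circumcenter of `x` with respect to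
`(A, B)`, it is the unique such circumcenter, and it lies in `A`. -/
theorem crm_step_reflection_in_B
    {H : Type*} [NormedAddCommGroup H] [InnerProductSpace ℝ H] [CompleteSpace H]
    (A B : Set H) (hAne : A.Nonempty) (hAcl : IsClosed A) (hAcv : Convex ℝ A)
    (hBne : B.Nonempty) (hBcl : IsClosed B) (hBcv : Convex ℝ B)
    (x pa : H) (hpa : IsProj A x pa) (hRA : (2 : ℝ) • pa - x ∈ B) :
    IsCircumcenter A B x pa ∧ (∀ c : H, IsCircumcenter A B x c → c = pa) ∧ pa ∈ A := by
  set r : H := (2 : ℝ) • pa - x with hr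
  have hpb : IsProj B r r := isProj_self hRA
  have h2r : (2 : ℝ) • r - r = r := by
    rw [two_smul]; abel
  have hset : ({x, r, (2 : ℝ) • r - r} : Set H) = {x, r} := by
    rw [h2r, Set.pair_eq_singleton]
  have hmid : pa ∈ affineSpan ℝ ({x, r} : Set H) := by
    have : pa = ((1 : ℝ) / 2) • (r -ᵥ x) +ᵥ x := by
      simp only [vsub_eq_sub, vadd_eq_add, hr]
      module
    rw [this]
    exact smul_vsub_vadd_mem_affineSpan_pair _ _ _
  have hnorm : ‖pa - x‖ = ‖pa - r‖ := by
    rw [show pa - r = -(pa - x) by rw [hr, two_smul]; abel, norm_neg]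
  have hcc : IsCircumcenter A B x pa := by
    refine ⟨pa, r, hpa, hpb, ?_, hnorm, ?_⟩
    · rw [show ({x, (2:ℝ) • pa - x, (2:ℝ) • r - ((2:ℝ) • pa - x)} : Set H)
          = {x, r, (2:ℝ) • r - r} from by rw [← hr], hset]
      exact hmid
    · rw [show (2:ℝ) • r - ((2:ℝ) • pa - x) = r from by rw [← hr, h2r]]
      exact hnorm
  refine ⟨hcc, ?_, hpa.1⟩
  rintro c ⟨pa', pb', hpa', hpb', hspan, hd1, hd2⟩
  have hpaeq : pa' = pa := isProj_unique hpa' hpa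
  rw [hpaeq] at hpb' hspan hd1 hd2
  have hpbeq : pb' = r := isProj_unique hpb' hpb
  rw [hpbeq] at hspan hd2
  rw [show ({x, (2:ℝ) • pa - x, (2:ℝ) • r - ((2:ℝ) • pa - x)} : Set H)
      = {x, r, (2:ℝ) • r - r} from by rw [← hr], hset] at hspan
  have hc : ∃ t : ℝ, t • (r - x) = c - x := by
    have : (c - x) +ᵥ x ∈ affineSpan ℝ ({x, r} : Set H) := by
      simpa using hspan
    simpa [vsub_eq_sub] using (vadd_left_mem_affineSpan_pair).mp this
  obtain ⟨t, ht⟩ := hc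
  have hrx : r - x = (2 : ℝ) • (pa - x) := by rw [hr]; module
  by_cases hpx : pa = x
  · -- then r = x and c = x = pa
    have hr0 : r - x = 0 := by rw [hrx, hpx]; simp
    have hcx : c = x := by
      have h := ht
      rw [hr0, smul_zero] at h
      have := sub_eq_zero.mp h.symm
      exact this
    rw [hcx, hpx]
  · have hcx : c - x = t • (r - x) := ht.symm
    have hcr : c - r = (t - 1) • (r - x) := by
      rw [sub_smul, ← hcx, one_smul]; abel
    rw [show (2:ℝ) • pa - x = r from rfl] at hd1
    rw [hcx, hcr, norm_smul, norm_smul] at hd1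
    have hne : ‖r - x‖ ≠ 0 := by
      rw [hrx]
      simp only [norm_smul, Real.norm_ofNat, ne_eq, mul_eq_zero]
      push_neg
      exact ⟨by norm_num, norm_ne_zero_iff.mpr (sub_ne_zero.mpr hpx)⟩
    have habs : |t| = |t - 1| := by
      have h := mul_right_cancel₀ hne hd1
      rw [Real.norm_eq_abs, Real.norm_eq_abs] at h
      exact h
    have ht2 : t = 1 / 2 := by
      rcases abs_eq_abs.mp habs with h | h
      · linarith
      · linarith
    have : c = x + ((1:ℝ)/2) • (r - x) := by
      have := hcx
      rw [ht2] at this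
      rw [← this]; abel
    rw [this, hrx]
    module
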